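/- Module-level shadow of Theorem 1.2 (Miller–Ravenel–Wilson): Let p be an odd prime, n > 3, F = ℤ/p, A = F[u][v,v^{−1}], and B = F[u,u^{−1}][v,v^{−1}]/A. Let a_i and x_i be as in the standard recursions (a_0 = 1, x_0 = v, with a_i = p a_{i−1} and x_i = x_{i−1}^p unless i > 1 and [i] = 1, in which case a_i = p a_{i−1} + p − 1 and x_i = x_{i−1}^p − u^{b_{n,i}} v^{p^i − p^{i−1}+1}). Then the following family of elements of B is F-linearly independent: the classes of u^{−j} for all j ≥ 1, together with the classes of x_i^s·u^{−j} for all i ≥ 0, all integers s ≥ 1 with p ∤ s, and all 1 ≤ j ≤ a_i. Moreover, for each such i and s, the F[u]-submodule of B generated by the class of x_i^s·u^{−a_i} is isomorphic to F[u]/(u^{a_i}). -/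

import Mathlib

namespace Stmt9

/-- `A = F[u][v,v⁻¹]`, the Laurent-polynomial ring in `v` over `F[u]`, `F = ℤ/p`. -/
abbrev A (p : ℕ) := LaurentPolynomial (Polynomial (ZMod p))

/-- `L = F[u,u⁻¹][v,v⁻¹]`, the Laurent-polynomial ring in `v` over `F[u,u⁻¹]`. -/
abbrev L (p : ℕ) := LaurentPolynomial (LaurentPolynomial (ZMod p))

/-- The canonical inclusion `A → L`, mapping coefficients through
`Polynomial.toLaurent : F[u] → F[u,u⁻¹]` and sending `v` to `v`. -/
noncomputable def incl (p : ℕ) : A p →ₐ[Polynomial (ZMod p)] L p :=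
  (AddMonoidAlgebra.lift (Polynomial (ZMod p)) (L p) ℤ)
    (AddMonoidAlgebra.of (LaurentPolynomial (ZMod p)) ℤ)

/-- `L` as an `A`-algebra (hence an `A`-module) via the inclusion `incl`. -/
noncomputable instance (p : ℕ) : Algebra (A p) (L p) :=
  (incl p).toRingHom.toAlgebra

noncomputable instance (p : ℕ) : IsScalarTower (Polynomial (ZMod p)) (A p) (L p) :=
  IsScalarTower.of_algebraMap_eq fun q => ((incl p).commutes q).symm

noncomputable instance (p : ℕ) : IsScalarTower (ZMod p) (A p) (L p) :=
  IsScalarTower.of_algebraMap_eq fun c => by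
    have h1 : algebraMap (ZMod p) (A p) c
        = algebraMap (Polynomial (ZMod p)) (A p) (Polynomial.C c) := by
      simp [AddMonoidAlgebra.coe_algebraMap, Polynomial.algebraMap_eq]
    have h2 : algebraMap (ZMod p) (L p) c
        = algebraMap (Polynomial (ZMod p)) (L p) (Polynomial.C c) := by
      simp [AddMonoidAlgebra.coe_algebraMap, Polynomial.algebraMap_eq]
    rw [h1, h2, IsScalarTower.algebraMap_apply (Polynomial (ZMod p)) (A p) (L p)]

/-- The image of `A` in `L`, as an `A`-submodule of `L`. -/
noncomputable def Asub (p : ℕ) : Submodule (A p) (L p) :=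
  LinearMap.range (Algebra.linearMap (A p) (L p))

/-- `B = F[u,u⁻¹][v,v⁻¹]/A`, as an `A`-module. -/
abbrev B (p : ℕ) := L p ⧸ Asub p

/-- The element `u ∈ A`. -/
noncomputable def uA (p : ℕ) : A p := LaurentPolynomial.C Polynomial.X

/-! ### Auxiliary machinery -/

open LaurentPolynomial Polynomial AddMonoidAlgebra

/-- The coefficient functional `f ↦ f m e` on `L`. -/
noncomputable def phi (p : ℕ) (m e : ℤ) : L p →ₗ[ZMod p] ZMod p where
  toFun f := (f.coeff m).coeff e
  map_add' f g := rfl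
  map_smul' c f := rfl

lemma toLaurent_coe (p : ℕ) (q : Polynomial (ZMod p)) (k : ℕ) :
    (toLaurent q).coeff (k : ℤ) = q.coeff k := by
  rw [LaurentPolynomial.coeff_toLaurent]
  exact Finsupp.mapDomain_apply Nat.castEmbedding.injective q.toFinsupp.coeff k

lemma toLaurent_neg (p : ℕ) (q : Polynomial (ZMod p)) (e : ℤ) (he : e < 0) :
    (toLaurent q).coeff e = 0 := by
  rw [LaurentPolynomial.coeff_toLaurent, Finsupp.mapDomain_notin_range]
  rintro ⟨k, rfl⟩
  have hk0 : (0 : ℤ) ≤ Nat.castEmbedding k := Int.natCast_nonneg k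
  omega

lemma incl_single (p : ℕ) (m : ℤ) (q : Polynomial (ZMod p)) :
    incl p (AddMonoidAlgebra.single m q) = AddMonoidAlgebra.single m (toLaurent q) := by
  have h1 : (AddMonoidAlgebra.single m q : A p) = q • AddMonoidAlgebra.single m (1 : Polynomial (ZMod p)) := by
    rw [AddMonoidAlgebra.smul_single, smul_eq_mul, mul_one]
  rw [h1, map_smul]
  have h2 : incl p (AddMonoidAlgebra.single m (1 : Polynomial (ZMod p)))
      = AddMonoidAlgebra.single m (1 : LaurentPolynomial (ZMod p)) := by
    have : (AddMonoidAlgebra.single m (1 : Polynomial (ZMod p)) : A p)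
        = AddMonoidAlgebra.of (Polynomial (ZMod p)) ℤ (Multiplicative.ofAdd m) := rfl
    rw [this, incl, AddMonoidAlgebra.lift_of]
    rfl
  rw [h2, AddMonoidAlgebra.smul_single]
  congr 1
  rw [Algebra.smul_def, mul_one, LaurentPolynomial.algebraMap_eq_toLaurent]

lemma incl_apply (p : ℕ) (z : A p) (m : ℤ) :
    (incl p z).coeff m = toLaurent (z.coeff m) := by
  induction z using AddMonoidAlgebra.induction_linear with
  | zero => simp
  | add f g hf hg => rw [map_add, AddMonoidAlgebra.coeff_add, Finsupp.add_apply, hf, hg,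
      AddMonoidAlgebra.coeff_add, Finsupp.add_apply, map_add]
  | single n q =>
      rw [incl_single, AddMonoidAlgebra.coeff_single, AddMonoidAlgebra.coeff_single,
        Finsupp.single_apply, Finsupp.single_apply]
      split <;> simp

lemma mem_Asub (p : ℕ) (z : A p) : incl p z ∈ Asub p := ⟨z, rfl⟩

lemma vanish (p : ℕ) (zz : L p) (hz : zz ∈ Asub p) (m e : ℤ) (he : e < 0) :
    (zz.coeff m).coeff e = 0 := by
  rcases hz with ⟨y, rfl⟩
  show ((incl p y).coeff m).coeff e = 0
  rw [incl_apply, toLaurent_neg _ _ _ he]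

/-- The "set `u = 0`" map on `A`. -/
noncomputable def Tmon (p : ℕ) : Multiplicative ℤ →* LaurentPolynomial (ZMod p) where
  toFun m := LaurentPolynomial.T m.toAdd
  map_one' := T_zero
  map_mul' x y := by
    show (T (x.toAdd + y.toAdd) : LaurentPolynomial (ZMod p)) = _
    rw [T_add]

noncomputable def eps (p : ℕ) : A p →+* LaurentPolynomial (ZMod p) :=
  AddMonoidAlgebra.liftNCRingHom
    ((LaurentPolynomial.C).comp (Polynomial.constantCoeff)) (Tmon p)
    (fun _ _ => Commute.all _ _)

lemma eps_single (p : ℕ) (m : ℤ) (q : Polynomial (ZMod p)) :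
    eps p (AddMonoidAlgebra.single m q) = LaurentPolynomial.C (q.coeff 0) * T m := by
  show AddMonoidAlgebra.liftNC _ _ (AddMonoidAlgebra.single m q) = _
  rw [AddMonoidAlgebra.liftNC_single]
  rfl

lemma eps_apply (p : ℕ) (z : A p) (m : ℤ) : (eps p z).coeff m = (z.coeff m).coeff 0 := by
  induction z using AddMonoidAlgebra.induction_linear with
  | zero => simp
  | add f g hf hg =>
      rw [map_add, AddMonoidAlgebra.coeff_add, Finsupp.add_apply, AddMonoidAlgebra.coeff_add,
        Finsupp.add_apply, hf, hg, ← Polynomial.coeff_add]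
  | single n q =>
      rw [eps_single, ← single_eq_C_mul_T, AddMonoidAlgebra.coeff_single,
        AddMonoidAlgebra.coeff_single, Finsupp.single_apply, Finsupp.single_apply]
      split <;> simp

lemma eps_T (p : ℕ) (m : ℤ) : eps p (T m : A p) = T m := by
  show eps p (AddMonoidAlgebra.single m 1) = T m
  rw [eps_single]; simp

lemma eps_uA (p : ℕ) : eps p (uA p) = 0 := by
  rw [uA, ← single_eq_C, eps_single]; simp

section EpsX

variable (p n : ℕ) (hp : p.Prime) (hn : 3 < n)
    (b : ℕ → ℕ)
    (hb : ∀ k : ℕ, 1 ≤ k →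
      b (k * (n - 1) + 1) = (p ^ n - 1) * ∑ m ∈ Finset.range k, p ^ (m * (n - 1)))
    (x : ℕ → A p)
    (hx0 : x 0 = LaurentPolynomial.T 1)
    (hxrec : ∀ i : ℕ, 1 ≤ i →
      x i = if i = 1 ∨ i % (n - 1) ≠ 1 then (x (i - 1)) ^ p
            else (x (i - 1)) ^ p -
              (uA p) ^ (b i) * LaurentPolynomial.T ((p ^ i - p ^ (i - 1) + 1 : ℕ) : ℤ))

include hp hn hb hx0 hxrec in
lemma eps_x : ∀ i : ℕ, eps p (x i) = T ((p ^ i : ℕ) : ℤ) := by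
  intro i
  induction i with
  | zero => rw [hx0, eps_T]; norm_num
  | succ i ih =>
      have hpow : (T ((p ^ i : ℕ) : ℤ) : LaurentPolynomial (ZMod p)) ^ p
          = T ((p ^ (i+1) : ℕ) : ℤ) := by
        rw [T_pow]
        congr 1
        push_cast [pow_succ]
        ring
      rw [hxrec (i+1) (by omega)]
      split_ifs with h
      · rw [map_pow, Nat.add_sub_cancel, ih, hpow]
      · push_neg at h
        obtain ⟨h1, h2⟩ := h
        have hdm := Nat.div_add_mod (i+1) (n-1)
        set k := (i+1) / (n-1) with hk
        rw [h2] at hdm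
        have hk1 : 1 ≤ k := by
          rcases Nat.eq_zero_or_pos k with h0 | h0
          · rw [h0, mul_zero] at hdm; omega
          · exact h0
        have hik : i + 1 = k * (n-1) + 1 := by rw [mul_comm]; omega
        have hbval := hb k hk1
        rw [← hik] at hbval
        have hbpos : 1 ≤ b (i+1) := by
          rw [hbval]
          have hp1 : 0 < p ^ n - 1 := by
            have h2le : 2 ≤ p := hp.two_le
            have hle : 2 ^ n ≤ p ^ n := Nat.pow_le_pow_left h2le n
            have hlt : 1 < 2 ^ n := Nat.one_lt_two_pow (by omega)
            omega
          have hp2 : 0 < ∑ m ∈ Finset.range k, p ^ (m * (n - 1)) :=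
            Finset.sum_pos (fun m _ => pow_pos hp.pos _) ⟨0, Finset.mem_range.mpr hk1⟩
          exact Nat.mul_pos hp1 hp2
        rw [map_sub, map_pow, Nat.add_sub_cancel, ih, hpow, map_mul, map_pow, eps_uA,
          zero_pow (by omega), zero_mul, sub_zero]

end EpsX

/-! ### The functionals evaluated on the family -/

lemma phi_C_T (p : ℕ) (m e c : ℤ) :
    phi p m e (LaurentPolynomial.C (T c) : L p)
      = if m = 0 ∧ e = c then 1 else 0 := by
  show ((AddMonoidAlgebra.single (0:ℤ) (T c : LaurentPolynomial (ZMod p))).coeff m).coeff e = _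
  rw [AddMonoidAlgebra.coeff_single, Finsupp.single_apply,
    apply_ite (fun f : LaurentPolynomial (ZMod p) => f.coeff e)]
  by_cases h1 : m = 0
  · subst h1
    rw [if_pos rfl, LaurentPolynomial.T_apply]
    by_cases h2 : e = c
    · simp [h2]
    · simp [h2, Ne.symm h2]
  · rw [if_neg (fun h => h1 h.symm), if_neg (fun h => h1 h.1)]
    rfl

lemma mulC_apply (p : ℕ) (f : L p) (r : LaurentPolynomial (ZMod p)) (m : ℤ) :
    (f * LaurentPolynomial.C r).coeff m = f.coeff m * r := by
  rw [← LaurentPolynomial.single_eq_C]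
  exact AddMonoidAlgebra.coeff_mul_single_zero f r m

lemma T_mul_apply (p : ℕ) (g : LaurentPolynomial (ZMod p)) (c e : ℤ) :
    ((g * T c : LaurentPolynomial (ZMod p))).coeff e = g.coeff (e - c) := by
  simp only [LaurentPolynomial.T]
  rw [AddMonoidAlgebra.coeff_mul_single_apply, mul_one, sub_eq_add_neg]

lemma algebraMap_mul_apply (p : ℕ) (q : Polynomial (ZMod p)) (z : A p) (m : ℤ) :
    (algebraMap (Polynomial (ZMod p)) (A p) q * z).coeff m = q * z.coeff m := by
  have hC : algebraMap (Polynomial (ZMod p)) (A p) q = LaurentPolynomial.C q := rfl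
  rw [hC, ← LaurentPolynomial.single_eq_C]
  exact AddMonoidAlgebra.coeff_single_zero_mul z q m

lemma phi_incl (p : ℕ) (m e c : ℤ) (z : A p) :
    phi p m e (incl p z * (LaurentPolynomial.C (T c) : L p))
      = (toLaurent (z.coeff m)).coeff (e - c) := by
  show (((incl p z * (LaurentPolynomial.C (T c) : L p)) : L p).coeff m).coeff e = _
  rw [mulC_apply, incl_apply, T_mul_apply]

lemma phi_smul (p : ℕ) (m e c : ℤ) (q : Polynomial (ZMod p)) (z : A p) :
    phi p m e (q • (incl p z * (LaurentPolynomial.C (T c) : L p)))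
      = (toLaurent (q * z.coeff m)).coeff (e - c) := by
  have h : q • (incl p z * (LaurentPolynomial.C (T c) : L p))
      = incl p (algebraMap (Polynomial (ZMod p)) (A p) q * z)
          * (LaurentPolynomial.C (T c) : L p) := by
    rw [Algebra.smul_def, map_mul, (incl p).commutes, mul_assoc]
  rw [h, phi_incl]
  congr 3
  exact algebraMap_mul_apply p q z m

/-- `s` and `i` are determined by `s * p ^ i` when `p ∤ s`. -/
lemma pow_inj {p : ℕ} (hp : p.Prime) :
    ∀ i i' s s' : ℕ, ¬ p ∣ s → ¬ p ∣ s' → s * p ^ i = s' * p ^ i' → i = i' ∧ s = s' := by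
  intro i
  induction i with
  | zero =>
      intro i' s s' hs hs' h
      cases i' with
      | zero => simpa using h
      | succ k =>
          exact absurd ⟨s' * p ^ k, by rw [pow_zero, mul_one] at h; rw [h, pow_succ]; ring⟩ hs
  | succ k ih =>
      intro i' s s' hs hs' h
      cases i' with
      | zero =>
          exact absurd ⟨s * p ^ k, by rw [pow_zero, mul_one] at h; rw [← h, pow_succ]; ring⟩ hs'
      | succ k' =>
          have h' : s * p ^ k = s' * p ^ k' := by
            have : (s * p ^ k) * p = (s' * p ^ k') * p := by
              rw [mul_assoc, mul_assoc, ← pow_succ, ← pow_succ]; exact h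
            exact Nat.eq_of_mul_eq_mul_right hp.pos this
          obtain ⟨h1, h2⟩ := ih k' s s' hs hs' h'
          exact ⟨by omega, h2⟩

/-! ### The index type and the family of representatives -/

/-- Index type for the family. -/
abbrev Idx (p : ℕ) (a : ℕ → ℕ) :=
  {j : ℕ // 1 ≤ j} ⊕
    {q : ℕ × ℕ × ℕ // 1 ≤ q.2.1 ∧ ¬ p ∣ q.2.1 ∧ 1 ≤ q.2.2 ∧ q.2.2 ≤ a q.1}

/-- Representatives in `L` of the family. -/
noncomputable def wfam (p : ℕ) (a : ℕ → ℕ) (x : ℕ → A p) : Idx p a → L p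
  | .inl j => (LaurentPolynomial.C (LaurentPolynomial.T (-(j.1 : ℤ))) : L p)
  | .inr q => incl p (x q.1.1 ^ q.1.2.1) *
      (LaurentPolynomial.C (LaurentPolynomial.T (-(q.1.2.2 : ℤ))) : L p)

/-- The `u`-depth of a family member. -/
def htf (p : ℕ) (a : ℕ → ℕ) : Idx p a → ℕ
  | .inl j => j.1
  | .inr q => q.1.2.2

/-- The marker `v`-exponent of a family member. -/
def vmf (p : ℕ) (a : ℕ → ℕ) : Idx p a → ℤ
  | .inl _ => 0
  | .inr q => ((q.1.2.1 * p ^ q.1.1 : ℕ) : ℤ)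

lemma keyval (p : ℕ) (hp : p.Prime) (a : ℕ → ℕ) (x : ℕ → A p)
    (hX : ∀ i s : ℕ, ∀ m : ℤ,
      ((x i ^ s).coeff m).coeff 0 = if ((s * p ^ i : ℕ) : ℤ) = m then 1 else 0)
    (ind i' : Idx p a) (hle : htf p a i' ≤ htf p a ind) :
    phi p (vmf p a ind) (-(htf p a ind : ℤ)) (wfam p a x i')
      = if i' = ind then 1 else 0 := by
  classical
  rcases i' with j' | q' <;> rcases ind with j | q
  · -- inl, inl
    simp only [wfam, htf, vmf]
    rw [phi_C_T]
    by_cases h : j' = j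
    · subst h; simp
    · rw [if_neg (by rintro ⟨-, h2⟩; exact h (Subtype.ext (by omega))),
        if_neg (by simpa [Sum.inl.injEq] using h)]
  · -- i' = inl j', ind = inr q
    simp only [wfam, htf, vmf]
    rw [phi_C_T, if_neg, if_neg (by simp)]
    rintro ⟨h1, -⟩
    have hne : q.1.2.1 * p ^ q.1.1 ≠ 0 :=
      Nat.mul_ne_zero (by have := q.2.1; omega) (pow_ne_zero _ hp.pos.ne')
    exact hne (by exact_mod_cast h1)
  · -- i' = inr q', ind = inl j
    simp only [wfam, htf, vmf] at hle ⊢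
    rw [phi_incl, if_neg (by simp)]
    rcases lt_or_eq_of_le hle with hlt | heq
    · exact toLaurent_neg _ _ _ (by omega)
    · have harg : -(j.1 : ℤ) - -(q'.1.2.2 : ℤ) = ((0 : ℕ) : ℤ) := by
        push_cast; omega
      rw [harg, toLaurent_coe, hX, if_neg]
      have hne : q'.1.2.1 * p ^ q'.1.1 ≠ 0 :=
        Nat.mul_ne_zero (by have := q'.2.1; omega) (pow_ne_zero _ hp.pos.ne')
      exact fun h1 => hne (by exact_mod_cast h1)
  · -- inr, inr
    simp only [wfam, htf, vmf] at hle ⊢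
    rw [phi_incl]
    rcases lt_or_eq_of_le hle with hlt | heq
    · rw [toLaurent_neg _ _ _ (by omega), if_neg]
      intro hE
      rw [Sum.inr.injEq] at hE
      subst hE
      omega
    · have harg : -(q.1.2.2 : ℤ) - -(q'.1.2.2 : ℤ) = ((0 : ℕ) : ℤ) := by
        push_cast; omega
      rw [harg, toLaurent_coe, hX]
      by_cases hss : q'.1.2.1 * p ^ q'.1.1 = q.1.2.1 * p ^ q.1.1
      · obtain ⟨hi, hs⟩ := pow_inj hp q'.1.1 q.1.1 q'.1.2.1 q.1.2.1 q'.2.2.1 q.2.2.1 hss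
        have hqq : q' = q := Subtype.ext (Prod.ext hi (Prod.ext hs heq))
        rw [hqq, if_pos rfl, if_pos rfl]
      · rw [if_neg (fun h => hss (by exact_mod_cast h)), if_neg]
        intro hE
        rw [Sum.inr.injEq] at hE
        subst hE
        exact hss rfl

lemma aux1 (p : ℕ) (hp : p.Prime) (a : ℕ → ℕ) (x : ℕ → A p)
    (hX : ∀ i s : ℕ, ∀ m : ℤ,
      ((x i ^ s).coeff m).coeff 0 = if ((s * p ^ i : ℕ) : ℤ) = m then 1 else 0) :
    LinearIndependent (ZMod p)
      (fun i : Idx p a => (Submodule.Quotient.mk (wfam p a x i) : B p)) := by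
  classical
  rw [linearIndependent_iff']
  intro t g hsum ind₀ hind₀
  by_contra hg₀
  have hmem : (∑ i ∈ t, g i • wfam p a x i) ∈ Asub p := by
    rw [← Submodule.Quotient.mk_eq_zero, ← hsum]
    rw [show (Submodule.Quotient.mk (∑ i ∈ t, g i • wfam p a x i) : B p)
        = ∑ i ∈ t, Submodule.Quotient.mk (g i • wfam p a x i) from
          map_sum ((Asub p).mkQ) _ t]
    exact Finset.sum_congr rfl fun i _ => Submodule.Quotient.mk_smul _ _ _
  obtain ⟨ind, hindT', hmax⟩ := Finset.exists_max_image
    (t.filter fun i => g i ≠ 0) (htf p a) ⟨ind₀, Finset.mem_filter.mpr ⟨hind₀, hg₀⟩⟩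
  have hind_t : ind ∈ t := (Finset.mem_filter.mp hindT').1
  have hgind : g ind ≠ 0 := (Finset.mem_filter.mp hindT').2
  have hht1 : 1 ≤ htf p a ind := by
    rcases ind with j | q
    · exact j.2
    · exact q.2.2.2.1
  have h0 : phi p (vmf p a ind) (-(htf p a ind : ℤ)) (∑ i ∈ t, g i • wfam p a x i) = 0 :=
    vanish p _ hmem _ _ (by omega)
  rw [map_sum] at h0
  simp only [map_smul, smul_eq_mul] at h0
  have hs2 : ∑ i ∈ t, g i * phi p (vmf p a ind) (-(htf p a ind : ℤ)) (wfam p a x i)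
      = g ind * phi p (vmf p a ind) (-(htf p a ind : ℤ)) (wfam p a x ind) := by
    apply Finset.sum_eq_single_of_mem ind hind_t
    intro bb hbb hbbne
    by_cases hgb : g bb = 0
    · rw [hgb, zero_mul]
    · rw [keyval p hp a x hX ind bb
        (hmax bb (Finset.mem_filter.mpr ⟨hbb, hgb⟩)), if_neg hbbne, mul_zero]
  have hval := keyval p hp a x hX ind ind (le_refl _)
  rw [if_pos rfl] at hval
  rw [hs2, hval, mul_one] at h0
  exact hgind h0

lemma aux2 (p : ℕ) (a i s : ℕ) (x : ℕ → A p)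
    (hX : ∀ m : ℤ,
      ((x i ^ s).coeff m).coeff 0 = if ((s * p ^ i : ℕ) : ℤ) = m then 1 else 0) :
    Nonempty
      ((↥(Submodule.span (Polynomial (ZMod p))
          {(Submodule.Quotient.mk
            (incl p (x i ^ s) *
              (LaurentPolynomial.C (LaurentPolynomial.T (-(a : ℤ))) : L p)) : B p)}))
        ≃ₗ[Polynomial (ZMod p)]
      (Polynomial (ZMod p) ⧸ Ideal.span {(Polynomial.X : Polynomial (ZMod p)) ^ a})) := by
  classical
  set w₀ : L p := incl p (x i ^ s) *
    (LaurentPolynomial.C (LaurentPolynomial.T (-(a : ℤ))) : L p) with hw₀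
  set y : B p := Submodule.Quotient.mk w₀ with hy
  have hker : LinearMap.ker (LinearMap.toSpanSingleton (Polynomial (ZMod p)) (B p) y)
      = Ideal.span {(Polynomial.X : Polynomial (ZMod p)) ^ a} := by
    ext q
    rw [LinearMap.mem_ker, Ideal.mem_span_singleton, LinearMap.toSpanSingleton_apply]
    constructor
    · intro hq
      have hmem : q • w₀ ∈ Asub p := by
        rw [← Submodule.Quotient.mk_eq_zero, Submodule.Quotient.mk_smul]
        exact hq
      rw [Polynomial.X_pow_dvd_iff]
      intro d
      induction d using Nat.strong_induction_on with
      | _ d IH =>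
      intro hd
      have h1 := vanish p _ hmem ((s * p ^ i : ℕ) : ℤ) ((d : ℤ) - a) (by omega)
      have h2 : phi p ((s * p ^ i : ℕ) : ℤ) ((d : ℤ) - a) (q • w₀)
          = (toLaurent (q * (x i ^ s).coeff ((s * p ^ i : ℕ) : ℤ))).coeff ((d : ℤ) - a - (-(a : ℤ))) :=
        phi_smul p _ _ _ q (x i ^ s)
      have harg : (d : ℤ) - a - (-(a : ℤ)) = ((d : ℕ) : ℤ) := by push_cast; ring
      rw [harg, toLaurent_coe] at h2
      have h3 : (q * (x i ^ s).coeff ((s * p ^ i : ℕ) : ℤ)).coeff d = 0 := by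
        rw [← h2]; exact h1
      rw [Polynomial.coeff_mul, Finset.sum_eq_single (d, 0)] at h3
      · rw [hX, if_pos rfl, mul_one] at h3
        exact h3
      · rintro ⟨b1, b2⟩ hbmem hbne
        have hb12 : b1 + b2 = d := Finset.HasAntidiagonal.mem_antidiagonal.mp hbmem
        have hb1 : b1 < d := by
          rcases Nat.lt_or_ge b1 d with h | h
          · exact h
          · exact absurd (Prod.ext (by omega) (by omega)) hbne
        rw [IH b1 hb1 (by omega), zero_mul]
      · intro hnotmem
        exact absurd (Finset.HasAntidiagonal.mem_antidiagonal.mpr (add_zero d)) hnotmem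
    · rintro ⟨c, rfl⟩
      have hXa : (Polynomial.X ^ a : Polynomial (ZMod p)) • y = 0 := by
        rw [hy, ← Submodule.Quotient.mk_smul, Submodule.Quotient.mk_eq_zero]
        have hsm : (Polynomial.X ^ a : Polynomial (ZMod p)) • w₀ = incl p (x i ^ s) := by
          rw [hw₀, Algebra.smul_def]
          have hA : algebraMap (Polynomial (ZMod p)) (L p) (Polynomial.X ^ a)
              = (LaurentPolynomial.C (LaurentPolynomial.T (a : ℤ)) : L p) := by
            show (LaurentPolynomial.C
              (algebraMap (Polynomial (ZMod p)) (LaurentPolynomial (ZMod p))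
                (Polynomial.X ^ a)) : L p) = _
            rw [LaurentPolynomial.algebraMap_eq_toLaurent, Polynomial.toLaurent_X_pow]
          rw [hA, ← mul_assoc, mul_comm (LaurentPolynomial.C (T (a:ℤ)) : L p) (incl p _),
            mul_assoc, ← map_mul, ← LaurentPolynomial.T_add]
          norm_num
        rw [hsm]
        exact mem_Asub p _
      rw [mul_comm, mul_smul, hXa, smul_zero]
  refine ⟨?_⟩
  have e1 : Submodule.span (Polynomial (ZMod p)) {y}
      = LinearMap.range (LinearMap.toSpanSingleton (Polynomial (ZMod p)) (B p) y) :=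
    LinearMap.span_singleton_eq_range _ _ _
  exact (LinearEquiv.ofEq _ _ e1).trans
    (((LinearMap.toSpanSingleton (Polynomial (ZMod p)) (B p) y).quotKerEquivRange).symm.trans
      (Submodule.quotEquivOfEq _ _ hker))

/-- module-level shadow of Theorem 1.2 of Miller–Ravenel–Wilson:
with `a i` and `x i` given by the standard recursions, the classes in `B` of
`u⁻ʲ` (`j ≥ 1`) together with the classes of `x i ^ s · u⁻ʲ`
(`i ≥ 0`, `s ≥ 1`, `p ∤ s`, `1 ≤ j ≤ a i`) are `F`-linearly independent, and for
each such `i, s` the `F[u]`-submodule of `B` generated by the class of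
`x i ^ s · u^(-a i)` is isomorphic to `F[u]/(u^(a i))`. -/
theorem stmt9 (p n : ℕ) (hp : p.Prime) (hodd : Odd p) (hn : 3 < n)
    (a : ℕ → ℕ) (ha0 : a 0 = 1)
    (harec : ∀ i : ℕ, 1 ≤ i →
      a i = if i = 1 ∨ i % (n - 1) ≠ 1 then p * a (i - 1) else p * a (i - 1) + (p - 1))
    (b : ℕ → ℕ)
    (hb : ∀ k : ℕ, 1 ≤ k →
      b (k * (n - 1) + 1) = (p ^ n - 1) * ∑ m ∈ Finset.range k, p ^ (m * (n - 1)))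
    (x : ℕ → A p)
    (hx0 : x 0 = LaurentPolynomial.T 1)
    (hxrec : ∀ i : ℕ, 1 ≤ i →
      x i = if i = 1 ∨ i % (n - 1) ≠ 1 then (x (i - 1)) ^ p
            else (x (i - 1)) ^ p -
              (uA p) ^ (b i) * LaurentPolynomial.T ((p ^ i - p ^ (i - 1) + 1 : ℕ) : ℤ)) :
    -- the classes of `u⁻ʲ` and of `x i ^ s · u⁻ʲ` are `F`-linearly independent in `B`
    LinearIndependent (ZMod p)
      (fun jq : ({j : ℕ // 1 ≤ j} ⊕
          {q : ℕ × ℕ × ℕ // 1 ≤ q.2.1 ∧ ¬ p ∣ q.2.1 ∧ 1 ≤ q.2.2 ∧ q.2.2 ≤ a q.1}) =>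
        match jq with
        | .inl j =>
          (Submodule.Quotient.mk
            ((LaurentPolynomial.C (LaurentPolynomial.T (-(j.1 : ℤ))) : L p)) : B p)
        | .inr q =>
          (Submodule.Quotient.mk
            (incl p (x q.1.1 ^ q.1.2.1) *
              (LaurentPolynomial.C (LaurentPolynomial.T (-(q.1.2.2 : ℤ))) : L p)) : B p)) ∧
    -- each class of `x i ^ s · u^(-a i)` generates an `F[u]`-submodule `≅ F[u]/(u^(a i))`
    (∀ i s : ℕ, 1 ≤ s → ¬ p ∣ s →
      Nonempty
        ((↥(Submodule.span (Polynomial (ZMod p))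
            {(Submodule.Quotient.mk
              (incl p (x i ^ s) *
                (LaurentPolynomial.C (LaurentPolynomial.T (-(a i : ℤ))) : L p)) : B p)}))
          ≃ₗ[Polynomial (ZMod p)]
        (Polynomial (ZMod p) ⧸ Ideal.span {(Polynomial.X : Polynomial (ZMod p)) ^ (a i)}))) := by
  have hX : ∀ i s : ℕ, ∀ m : ℤ,
      ((x i ^ s).coeff m).coeff 0 = if ((s * p ^ i : ℕ) : ℤ) = m then 1 else 0 := by
    intro i s m
    rw [← eps_apply, map_pow, eps_x p n hp hn b hb x hx0 hxrec i, LaurentPolynomial.T_pow,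
      LaurentPolynomial.T_apply, Nat.cast_mul]
  constructor
  · have hfam : (fun jq : Idx p a =>
        match jq with
        | .inl j =>
          (Submodule.Quotient.mk
            ((LaurentPolynomial.C (LaurentPolynomial.T (-(j.1 : ℤ))) : L p)) : B p)
        | .inr q =>
          (Submodule.Quotient.mk
            (incl p (x q.1.1 ^ q.1.2.1) *
              (LaurentPolynomial.C (LaurentPolynomial.T (-(q.1.2.2 : ℤ))) : L p)) : B p))
        = fun i : Idx p a => (Submodule.Quotient.mk (wfam p a x i) : B p) := by
      funext jq
      rcases jq with j | q <;> rfl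
    exact hfam ▸ aux1 p hp a x hX
  · intro i s _ _
    exact aux2 p (a i) i s x (hX i s)

end Stmt9
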